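/- For $r \ge 1$ and even $N \ge 2$, the function $f(x) = \sum_{j=0}^{2^r - 1} \cos^N\left(x + \frac{\pi j}{2^r}\right)$ attains its maximum over the reals at every point $x \in \frac{\pi}{2^r}\mathbb{Z}$. In particular, $f(x) \le f(0)$ for all real $x$. -/

import Mathlib

open Real Finset Complex

noncomputable def gc (M : ℕ) (c : ℤ) : ℝ := if (2 * (M:ℤ)) ∣ c then (M:ℝ) else 0

lemma gc_nonneg (M : ℕ) (c : ℤ) : 0 ≤ gc M c := by
  unfold gc; split <;> positivity

lemma geom_sum_exp (M : ℕ) (hM : 0 < M) (c : ℤ) (hc : Even c) :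
    ∑ j ∈ Finset.range M, Complex.exp ((c:ℂ) * ((π:ℂ) * j / M) * I) = ((gc M c : ℝ) : ℂ) := by
  have hπ : (π:ℂ) ≠ 0 := by exact_mod_cast Real.pi_ne_zero
  have hM' : (M:ℂ) ≠ 0 := Nat.cast_ne_zero.mpr hM.ne'
  have hterm : ∀ j ∈ Finset.range M, Complex.exp ((c:ℂ) * ((π:ℂ) * j / M) * I)
      = Complex.exp ((c:ℂ) * ((π:ℂ) / M) * I) ^ j := by
    intro j _
    rw [← Complex.exp_nat_mul]
    ring_nf
  rw [Finset.sum_congr rfl hterm]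
  unfold gc
  by_cases hd : (2 * (M:ℤ)) ∣ c
  · rw [if_pos hd]
    obtain ⟨t, ht⟩ := hd
    have h1 : Complex.exp ((c:ℂ)*((π:ℂ)/M)*I) = 1 := by
      have h2 : ((c:ℂ) * ((π:ℂ)/M) * I) = (t:ℤ) * (2*(π:ℂ)*I) := by
        have : ((c:ℂ)) = 2 * M * t := by exact_mod_cast congrArg (Int.cast : ℤ → ℂ) ht
        rw [this]; field_simp
      rw [h2, Complex.exp_int_mul_two_pi_mul_I]
    simp [h1]
  · have hω : Complex.exp ((c:ℂ)*((π:ℂ)/M)*I) ≠ 1 := by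
      intro h1
      rw [Complex.exp_eq_one_iff] at h1
      obtain ⟨n, hn⟩ := h1
      apply hd
      refine ⟨n, ?_⟩
      have h3 : ((c:ℂ)) = 2 * M * n := by
        field_simp at hn
        have h4 : (c:ℂ) * ((π:ℂ)*I) = (2 * M * n) * ((π:ℂ)*I) := by linear_combination ((π:ℂ)*I) * hn
        exact mul_right_cancel₀ (mul_ne_zero hπ Complex.I_ne_zero) h4
      exact_mod_cast h3
    rw [geom_sum_eq hω]
    have hpow : Complex.exp ((c:ℂ)*((π:ℂ)/M)*I) ^ M = 1 := by
      rw [← Complex.exp_nat_mul]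
      obtain ⟨d, hd2⟩ := hc
      have h4 : (M:ℂ) * ((c:ℂ)*((π:ℂ)/M)*I) = (d:ℤ) * (2*(π:ℂ)*I) := by
        have : ((c:ℂ)) = 2 * d := by
          have : c = 2 * d := by omega
          exact_mod_cast congrArg (Int.cast : ℤ → ℂ) this
        rw [this]; field_simp
      rw [h4, Complex.exp_int_mul_two_pi_mul_I]
    simp [hpow, hd]

lemma cos_pow_eq (N : ℕ) (z : ℂ) :
    Complex.cos z ^ N = ∑ m ∈ Finset.range (N+1),
      ((N.choose m : ℂ) / 2^N) * Complex.exp (((2*(m:ℤ) - N : ℤ) : ℂ) * z * I) := by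
  have h : Complex.cos z = (Complex.exp (z*I) + Complex.exp (-z*I)) / 2 := by
    rw [Complex.cos]
  rw [h, div_pow, add_pow, Finset.sum_div]
  apply Finset.sum_congr rfl
  intro m hm
  have hm' : m ≤ N := Nat.lt_succ_iff.mp (Finset.mem_range.mp hm)
  rw [← Complex.exp_nat_mul, ← Complex.exp_nat_mul, ← Complex.exp_add]
  have h5 : (m:ℂ) * (z*I) + ((N - m : ℕ):ℂ) * (-z*I) = ((2*(m:ℤ) - N : ℤ):ℂ) * z * I := by
    push_cast [Nat.cast_sub hm']
    ring
  rw [h5]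
  ring

lemma sum_cos_pow (M N : ℕ) (hM : 0 < M) (hN : Even N) (y : ℝ) :
    ∑ j ∈ Finset.range M, Real.cos (y + π * j / M) ^ N
    = ∑ m ∈ Finset.range (N+1),
        ((N.choose m : ℝ) / 2^N * gc M (2*(m:ℤ) - (N:ℤ)))
          * Real.cos (((2*(m:ℤ) - (N:ℤ) : ℤ):ℝ) * y) := by
  have heven : ∀ m : ℕ, Even (2*(m:ℤ) - (N:ℤ)) := by
    intro m
    obtain ⟨d, hd⟩ := hN
    exact ⟨(m:ℤ) - d, by push_cast [hd]; ring⟩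
  have key : ((∑ j ∈ Finset.range M, Real.cos (y + π * j / M) ^ N : ℝ) : ℂ)
      = ∑ m ∈ Finset.range (N+1),
          (((N.choose m : ℝ) / 2^N * gc M (2*(m:ℤ) - (N:ℤ)) : ℝ) : ℂ)
            * Complex.exp ((((((2*(m:ℤ) - (N:ℤ) : ℤ)):ℝ) * y : ℝ)) * I) := by
    push_cast
    calc ∑ j ∈ Finset.range M, Complex.cos ((y:ℂ) + (π:ℂ) * j / M) ^ N
        = ∑ j ∈ Finset.range M, ∑ m ∈ Finset.range (N+1),
            ((N.choose m : ℂ) / 2^N)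
              * (Complex.exp (((2*(m:ℤ) - (N:ℤ) : ℤ):ℂ) * (y:ℂ) * I)
                 * Complex.exp (((2*(m:ℤ) - (N:ℤ) : ℤ):ℂ) * ((π:ℂ) * j / M) * I)) := by
          refine Finset.sum_congr rfl fun j _ => ?_
          rw [cos_pow_eq]
          refine Finset.sum_congr rfl fun m _ => ?_
          rw [← Complex.exp_add]
          congr 2
          push_cast
          ring
      _ = ∑ m ∈ Finset.range (N+1),
            ((N.choose m : ℂ) / 2^N) * Complex.exp (((2*(m:ℤ) - (N:ℤ) : ℤ):ℂ) * (y:ℂ) * I)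
              * ∑ j ∈ Finset.range M, Complex.exp (((2*(m:ℤ) - (N:ℤ) : ℤ):ℂ) * ((π:ℂ) * j / M) * I) := by
          rw [Finset.sum_comm]
          refine Finset.sum_congr rfl fun m _ => ?_
          rw [Finset.mul_sum]
          refine Finset.sum_congr rfl fun j _ => ?_
          ring
      _ = _ := by
          refine Finset.sum_congr rfl fun m _ => ?_
          rw [geom_sum_exp M hM _ (heven m)]
          push_cast
          ring
  have h2 := congrArg Complex.re key
  rw [Complex.ofReal_re, Complex.re_sum] at h2
  refine h2.trans (Finset.sum_congr rfl fun m _ => ?_)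
  rw [Complex.re_ofReal_mul, Complex.exp_ofReal_mul_I_re]

theorem stmt2 (r N : ℕ) (hr : 1 ≤ r) (hN : Even N) (hN2 : 2 ≤ N) (x : ℝ) (k : ℤ) :
    ∑ j ∈ Finset.range (2 ^ r), Real.cos (x + π * j / 2 ^ r) ^ N ≤
      ∑ j ∈ Finset.range (2 ^ r), Real.cos (π / 2 ^ r * (k : ℝ) + π * j / 2 ^ r) ^ N := by
  have hM : 0 < 2 ^ r := Nat.pow_pos (by norm_num)
  have h2 : ((2:ℝ) ^ r) = ((2 ^ r : ℕ) : ℝ) := by push_cast; ring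
  simp only [h2]
  rw [sum_cos_pow _ _ hM hN x, sum_cos_pow _ _ hM hN _]
  apply Finset.sum_le_sum
  intro m _
  by_cases hd : (2 * ((2^r : ℕ):ℤ)) ∣ (2*(m:ℤ) - (N:ℤ))
  · have hcos : Real.cos (((2*(m:ℤ) - (N:ℤ) : ℤ):ℝ) * (π / ((2^r : ℕ):ℝ) * k)) = 1 := by
      obtain ⟨t, ht⟩ := hd
      have hMne : ((2^r : ℕ):ℝ) ≠ 0 := by positivity
      have hc : ((2*(m:ℤ) - (N:ℤ) : ℤ):ℝ) = 2 * ((2^r:ℕ):ℝ) * (t:ℝ) := by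
        exact_mod_cast congrArg (Int.cast : ℤ → ℝ) ht
      have harg : ((2*(m:ℤ) - (N:ℤ) : ℤ):ℝ) * (π / ((2^r : ℕ):ℝ) * k)
          = ((t * k : ℤ):ℝ) * (2 * π) := by
        rw [hc]; push_cast; field_simp
      rw [harg, Real.cos_int_mul_two_pi]
    rw [hcos, mul_one]
    have hb : 0 ≤ (N.choose m : ℝ) / 2^N * gc (2^r) (2*(m:ℤ) - (N:ℤ)) := by
      have := gc_nonneg (2^r) (2*(m:ℤ) - (N:ℤ))
      positivity
    calc (N.choose m : ℝ) / 2^N * gc (2^r) (2*(m:ℤ) - (N:ℤ))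
          * Real.cos (((2*(m:ℤ) - (N:ℤ) : ℤ):ℝ) * x)
        ≤ (N.choose m : ℝ) / 2^N * gc (2^r) (2*(m:ℤ) - (N:ℤ)) * 1 :=
          mul_le_mul_of_nonneg_left (Real.cos_le_one _) hb
      _ = _ := mul_one _
  · have hz : gc (2^r) (2*(m:ℤ) - (N:ℤ)) = 0 := if_neg hd
    simp [hz]
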